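/- Let x, y, z ∈ SL(2,ℂ) with tr(x) = tr(y) = tr(z), tr(xy) = 1, and tr(yz) = 1. Then x⁶ · y⁻¹ · x⁻¹ · y · (z⁻¹ y⁻² z⁻¹) · y · x⁻¹ · y⁻¹ = x¹². -/

import Mathlib

/-- The trace of an element of SL(2,ℂ). -/
noncomputable def trSL (A : Matrix.SpecialLinearGroup (Fin 2) ℂ) : ℂ :=
  Matrix.trace (A : Matrix (Fin 2) (Fin 2) ℂ)

section NC
variable {A : Type*} [Ring A] (τ X Y Z : A)

theorem nc_key
    (cX : X * τ = τ * X) (cY : Y * τ = τ * Y) (cZ : Z * τ = τ * Z)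
    (mX : X * X = τ * X - 1) (mY : Y * Y = τ * Y - 1) (mZ : Z * Z = τ * Z - 1)
    (mYX : Y * X = τ * X + τ * Y + 1 - τ * τ - X * Y)
    (mZY : Z * Y = τ * Y + τ * Z + 1 - τ * τ - Y * Z) :
    X ^ 6 * ((τ - Y) * ((τ - X) * (Y * ((τ - Z) * ((τ - Y) * ((τ - Y) * ((τ - Z) *
      (Y * ((τ - X) * (τ - Y)))))))))) = X ^ 12 := by
  have cXw : ∀ w : A, X * (τ * w) = τ * (X * w) := fun w => by
    rw [← mul_assoc, cX, mul_assoc]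
  have cYw : ∀ w : A, Y * (τ * w) = τ * (Y * w) := fun w => by
    rw [← mul_assoc, cY, mul_assoc]
  have cZw : ∀ w : A, Z * (τ * w) = τ * (Z * w) := fun w => by
    rw [← mul_assoc, cZ, mul_assoc]
  have mXw : ∀ w : A, X * (X * w) = τ * (X * w) - w := fun w => by
    rw [← mul_assoc, mX, sub_mul, one_mul, mul_assoc]
  have mYw : ∀ w : A, Y * (Y * w) = τ * (Y * w) - w := fun w => by
    rw [← mul_assoc, mY, sub_mul, one_mul, mul_assoc]
  have mZw : ∀ w : A, Z * (Z * w) = τ * (Z * w) - w := fun w => by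
    rw [← mul_assoc, mZ, sub_mul, one_mul, mul_assoc]
  have mYXw : ∀ w : A, Y * (X * w) =
      τ * (X * w) + τ * (Y * w) + w - τ * (τ * w) - X * (Y * w) := fun w => by
    rw [← mul_assoc, mYX]; noncomm_ring
  have mZYw : ∀ w : A, Z * (Y * w) =
      τ * (Y * w) + τ * (Z * w) + w - τ * (τ * w) - Y * (Z * w) := fun w => by
    rw [← mul_assoc, mZY]; noncomm_ring
  have hQP : (τ - Y) * (τ - X) = -((X + Y - τ) * Y) := by
    simp only [mul_add, mul_sub, add_mul, sub_mul, mul_one, one_mul, mul_assoc,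
      cXw, cYw, cZw, mXw, mYw, mZw, mYXw, mZYw, cX, cY, cZ, mX, mY, mZ, mYX, mZY]
    abel
  have hPQ : (τ - X) * (τ - Y) = -(Y * (X + Y - τ)) := by
    simp only [mul_add, mul_sub, add_mul, sub_mul, mul_one, one_mul, mul_assoc,
      cXw, cYw, cZw, mXw, mYw, mZw, mYXw, mZYw, cX, cY, cZ, mX, mY, mZ, mYX, mZY]
    abel
  have hWQ : (τ - Z) * (τ - Y) = -(Y * (Y + Z - τ)) := by
    simp only [mul_add, mul_sub, add_mul, sub_mul, mul_one, one_mul, mul_assoc,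
      cXw, cYw, cZw, mXw, mYw, mZw, mYXw, mZYw, cX, cY, cZ, mX, mY, mZ, mYX, mZY]
    abel
  have hQW : (τ - Y) * (τ - Z) = -((Y + Z - τ) * Y) := by
    simp only [mul_add, mul_sub, add_mul, sub_mul, mul_one, one_mul, mul_assoc,
      cXw, cYw, cZw, mXw, mYw, mZw, mYXw, mZYw, cX, cY, cZ, mX, mY, mZ, mYX, mZY]
    abel
  have hu2 : (Y + Z - τ) * (Y + Z - τ) = -1 := by
    simp only [mul_add, mul_sub, add_mul, sub_mul, mul_one, one_mul, mul_assoc,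
      cXw, cYw, cZw, mXw, mYw, mZw, mYXw, mZYw, cX, cY, cZ, mX, mY, mZ, mYX, mZY]
    abel
  have hu2w : ∀ w : A, (Y + Z - τ) * ((Y + Z - τ) * w) = -w := fun w => by
    rw [← mul_assoc, hu2, neg_one_mul]
  have hsYs : (X + Y - τ) * (Y * (X + Y - τ)) = -X := by
    simp only [mul_add, mul_sub, add_mul, sub_mul, mul_one, one_mul, mul_assoc,
      cXw, cYw, cZw, mXw, mYw, mZw, mYXw, mZYw, cX, cY, cZ, mX, mY, mZ, mYX, mZY]
    abel
  have hs2 : (X + Y - τ) * (X + Y - τ) = -1 := by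
    simp only [mul_add, mul_sub, add_mul, sub_mul, mul_one, one_mul, mul_assoc,
      cXw, cYw, cZw, mXw, mYw, mZw, mYXw, mZYw, cX, cY, cZ, mX, mY, mZ, mYX, mZY]
    abel
  have hsw : ∀ w : A, (X + Y - τ) * (τ * w) = τ * ((X + Y - τ) * w) := fun w => by
    simp only [add_mul, sub_mul, cXw, cYw, mul_add, mul_sub]
  have hX6 : X ^ 6 = τ * (τ * (τ * (τ * (τ * X)))) -
      (τ * (τ * (τ * X)) + τ * (τ * (τ * X)) + τ * (τ * (τ * X)) + τ * (τ * (τ * X))) +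
      (τ * X + τ * X + τ * X) - τ * (τ * (τ * τ)) + (τ * τ + τ * τ + τ * τ) - 1 := by
    simp only [pow_succ, pow_zero, one_mul, mul_add, mul_sub, add_mul, sub_mul,
      mul_one, mul_assoc, mXw, mX, cXw, cX]
    abel
  have hY6w : ∀ w : A, Y * (Y * (Y * (Y * (Y * (Y * w))))) =
      τ * (τ * (τ * (τ * (τ * (Y * w))))) -
      (τ * (τ * (τ * (Y * w))) + τ * (τ * (τ * (Y * w))) + τ * (τ * (τ * (Y * w))) + τ * (τ * (τ * (Y * w)))) +
      (τ * (Y * w) + τ * (Y * w) + τ * (Y * w)) - τ * (τ * (τ * (τ * w))) +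
      (τ * (τ * w) + τ * (τ * w) + τ * (τ * w)) - w := fun w => by
    simp only [mul_add, mul_sub, mul_one, mul_assoc, mYw, cYw]
    abel
  have hdist : ∀ v w : A, (X + Y - τ) *
      (τ * (τ * (τ * (τ * (τ * v)))) -
        (τ * (τ * (τ * v)) + τ * (τ * (τ * v)) + τ * (τ * (τ * v)) + τ * (τ * (τ * v))) +
        (τ * v + τ * v + τ * v) - τ * (τ * (τ * (τ * w))) +
        (τ * (τ * w) + τ * (τ * w) + τ * (τ * w)) - w) =
      τ * (τ * (τ * (τ * (τ * ((X + Y - τ) * v))))) -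
        (τ * (τ * (τ * ((X + Y - τ) * v))) + τ * (τ * (τ * ((X + Y - τ) * v))) +
          τ * (τ * (τ * ((X + Y - τ) * v))) + τ * (τ * (τ * ((X + Y - τ) * v)))) +
        (τ * ((X + Y - τ) * v) + τ * ((X + Y - τ) * v) + τ * ((X + Y - τ) * v)) -
        τ * (τ * (τ * (τ * ((X + Y - τ) * w)))) +
        (τ * (τ * ((X + Y - τ) * w)) + τ * (τ * ((X + Y - τ) * w)) +
          τ * (τ * ((X + Y - τ) * w))) - (X + Y - τ) * w := fun v w => by
    simp only [mul_add, mul_sub, hsw]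
  have hfin : (X + Y - τ) * (Y * (Y * (Y * (Y * (Y * (Y * (X + Y - τ))))))) = -(X ^ 6) := by
    rw [hY6w, hdist, hsYs, hs2, hX6]
    simp only [mul_neg, mul_one]
    abel
  calc X ^ 6 * ((τ - Y) * ((τ - X) * (Y * ((τ - Z) * ((τ - Y) * ((τ - Y) * ((τ - Z) *
      (Y * ((τ - X) * (τ - Y))))))))))
      = X ^ 6 * (((τ - Y) * (τ - X)) * ((Y * ((τ - Z) * (τ - Y))) *
        ((((τ - Y) * (τ - Z)) * Y) * ((τ - X) * (τ - Y))))) := by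
          simp only [mul_assoc]
    _ = X ^ 6 * ((-((X + Y - τ) * Y)) * ((Y * (-(Y * (Y + Z - τ)))) *
        (((-((Y + Z - τ) * Y)) * Y) * (-(Y * (X + Y - τ)))))) := by
          rw [hQP, hPQ, hWQ, hQW]
    _ = X ^ 6 * ((X + Y - τ) * (Y * (Y * (Y * ((Y + Z - τ) * ((Y + Z - τ) *
        (Y * (Y * (Y * (X + Y - τ)))))))))) := by
          simp only [mul_neg, neg_mul, neg_neg, mul_assoc]
    _ = X ^ 6 * ((X + Y - τ) * (Y * (Y * (Y * (-(Y * (Y * (Y * (X + Y - τ))))))))) := by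
          rw [hu2w]
    _ = -(X ^ 6 * ((X + Y - τ) * (Y * (Y * (Y * (Y * (Y * (Y * (X + Y - τ))))))))) := by
          simp only [mul_neg]
    _ = -(X ^ 6 * (-(X ^ 6))) := by rw [hfin]
    _ = X ^ 6 * X ^ 6 := by simp only [mul_neg, neg_neg]
    _ = X ^ 12 := by rw [← pow_add]

end NC

lemma coe_inv_eq (g : Matrix.SpecialLinearGroup (Fin 2) ℂ) :
    ((g⁻¹ : Matrix.SpecialLinearGroup (Fin 2) ℂ) : Matrix (Fin 2) (Fin 2) ℂ)
      = trSL g • (1 : Matrix (Fin 2) (Fin 2) ℂ) - g := by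
  rw [Matrix.SpecialLinearGroup.coe_inv, Matrix.adjugate_fin_two]
  ext i j
  fin_cases i <;> fin_cases j <;>
    simp [trSL, Matrix.trace_fin_two]

/-- Core of the longitude computation for the 12-crossing knot `Q₂`: under the
trace conditions, `x⁶ y⁻¹ x⁻¹ y (z⁻¹ y⁻² z⁻¹) y x⁻¹ y⁻¹ = x¹²`. -/
theorem Q2_longitude
    (x y z : Matrix.SpecialLinearGroup (Fin 2) ℂ)
    (hxy : trSL x = trSL y) (hxz : trSL x = trSL z)
    (cxy : trSL (x * y) = 1) (cyz : trSL (y * z) = 1) :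
    x ^ 6 * y⁻¹ * x⁻¹ * y * (z⁻¹ * y ^ (-2 : ℤ) * z⁻¹) * y * x⁻¹ * y⁻¹ = x ^ 12 := by
  set M := Matrix (Fin 2) (Fin 2) ℂ
  set t : ℂ := trSL x with ht
  set τ : M := t • (1 : M) with hτ
  set X : M := (x : M)
  set Y : M := (y : M)
  set Z : M := (z : M)
  have hXi : ((x⁻¹ : Matrix.SpecialLinearGroup (Fin 2) ℂ) : M) = τ - X := by
    rw [coe_inv_eq]
  have hYi : ((y⁻¹ : Matrix.SpecialLinearGroup (Fin 2) ℂ) : M) = τ - Y := by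
    rw [coe_inv_eq, ← hxy]
  have hZi : ((z⁻¹ : Matrix.SpecialLinearGroup (Fin 2) ℂ) : M) = τ - Z := by
    rw [coe_inv_eq, ← hxz]
  have cXc : X * τ = τ * X := by
    rw [hτ, smul_mul_assoc, mul_smul_comm, one_mul, mul_one]
  have cYc : Y * τ = τ * Y := by
    rw [hτ, smul_mul_assoc, mul_smul_comm, one_mul, mul_one]
  have cZc : Z * τ = τ * Z := by
    rw [hτ, smul_mul_assoc, mul_smul_comm, one_mul, mul_one]
  have mX : X * X = τ * X - 1 := by
    have h : X * ((x⁻¹ : Matrix.SpecialLinearGroup (Fin 2) ℂ) : M) = 1 := by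
      rw [← Matrix.SpecialLinearGroup.coe_mul, mul_inv_cancel,
        Matrix.SpecialLinearGroup.coe_one]
    rw [hXi, mul_sub, cXc] at h
    have e : X * X = τ * X - (τ * X - X * X) := by abel
    rw [e, h]
  have mY : Y * Y = τ * Y - 1 := by
    have h : Y * ((y⁻¹ : Matrix.SpecialLinearGroup (Fin 2) ℂ) : M) = 1 := by
      rw [← Matrix.SpecialLinearGroup.coe_mul, mul_inv_cancel,
        Matrix.SpecialLinearGroup.coe_one]
    rw [hYi, mul_sub, cYc] at h
    have e : Y * Y = τ * Y - (τ * Y - Y * Y) := by abel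
    rw [e, h]
  have mZ : Z * Z = τ * Z - 1 := by
    have h : Z * ((z⁻¹ : Matrix.SpecialLinearGroup (Fin 2) ℂ) : M) = 1 := by
      rw [← Matrix.SpecialLinearGroup.coe_mul, mul_inv_cancel,
        Matrix.SpecialLinearGroup.coe_one]
    rw [hZi, mul_sub, cZc] at h
    have e : Z * Z = τ * Z - (τ * Z - Z * Z) := by abel
    rw [e, h]
  have mYX : Y * X = τ * X + τ * Y + 1 - τ * τ - X * Y := by
    have h : (τ - Y) * (τ - X) = 1 - X * Y := by
      have h1 : (((x * y)⁻¹ : Matrix.SpecialLinearGroup (Fin 2) ℂ) : M)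
          = trSL (x * y) • (1 : M) - X * Y := by
        rw [coe_inv_eq, Matrix.SpecialLinearGroup.coe_mul]
      rw [cxy, one_smul, mul_inv_rev, Matrix.SpecialLinearGroup.coe_mul,
        hYi, hXi] at h1
      exact h1
    have h2 : Y * X = (τ - Y) * (τ - X) - (τ * τ - τ * X - Y * τ) := by
      simp only [mul_sub, sub_mul]; abel
    rw [h2, h, cYc]
    abel
  have mZY : Z * Y = τ * Y + τ * Z + 1 - τ * τ - Y * Z := by
    have h : (τ - Z) * (τ - Y) = 1 - Y * Z := by
      have h1 : (((y * z)⁻¹ : Matrix.SpecialLinearGroup (Fin 2) ℂ) : M)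
          = trSL (y * z) • (1 : M) - Y * Z := by
        rw [coe_inv_eq, Matrix.SpecialLinearGroup.coe_mul]
      rw [cyz, one_smul, mul_inv_rev, Matrix.SpecialLinearGroup.coe_mul,
        hZi, hYi] at h1
      exact h1
    have h2 : Z * Y = (τ - Z) * (τ - Y) - (τ * τ - τ * Y - Z * τ) := by
      simp only [mul_sub, sub_mul]; abel
    rw [h2, h, cZc]
    abel
  have key := nc_key τ X Y Z cXc cYc cZc mX mY mZ mYX mZY
  have h2 : y ^ (-2 : ℤ) = y⁻¹ * y⁻¹ := by group
  rw [h2]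
  apply Subtype.coe_injective
  calc ((x ^ 6 * y⁻¹ * x⁻¹ * y * (z⁻¹ * (y⁻¹ * y⁻¹) * z⁻¹) * y * x⁻¹ * y⁻¹ :
        Matrix.SpecialLinearGroup (Fin 2) ℂ) : M)
      = X ^ 6 * (τ - Y) * (τ - X) * Y * ((τ - Z) * ((τ - Y) * (τ - Y)) * (τ - Z)) * Y *
        (τ - X) * (τ - Y) := by
        simp only [Matrix.SpecialLinearGroup.coe_mul, Matrix.SpecialLinearGroup.coe_pow,
          hXi, hYi, hZi]
        rfl
    _ = X ^ 6 * ((τ - Y) * ((τ - X) * (Y * ((τ - Z) * ((τ - Y) * ((τ - Y) * ((τ - Z) *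
        (Y * ((τ - X) * (τ - Y)))))))))) := by simp only [mul_assoc]
    _ = X ^ 12 := key
    _ = ((x ^ 12 : Matrix.SpecialLinearGroup (Fin 2) ℂ) : M) := by
        rw [Matrix.SpecialLinearGroup.coe_pow]
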